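/- Let B and E be small categories and p : E ⥤ B a functor. Then p is a discrete fibration if and only if the commutative square of categories and functors whose top edge is the induced functor p^→ : Arrow(E) ⥤ Arrow(B) on arrow categories, whose vertical edges are the codomain functors cod : Arrow(E) ⥤ E and cod : Arrow(B) ⥤ B, and whose bottom edge is p : E ⥤ B, is a pullback square in the category Cat of small categories. -/

import Mathlib

open CategoryTheory

universe u

/-- A functor `p : E ⥤ B` is a discrete fibration if for every object `e` of `E` and every
morphism `f : b ⟶ p.obj e` in `B` there is a unique pair `(e', g : e' ⟶ e)` with
`p.obj e' = b` and `p.map g = f` (up to the identification `p.obj e' = b`). -/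
def IsDiscreteFibration {E B : Type*} [Category E] [Category B] (p : E ⥤ B) : Prop :=
  ∀ {e : E} {b : B} (f : b ⟶ p.obj e),
    ∃! eg : Σ e' : E, e' ⟶ e,
      ∃ h : p.obj eg.1 = b, p.map eg.2 = eqToHom h ≫ f

@[simp]
theorem CategoryTheory.Functor.mapArrow_obj_hom {C D : Type*} [Category C] [Category D]
    (F : C ⥤ D) (X : Arrow C) : (F.mapArrow.obj X).hom = F.map X.hom := rfl

@[simp]
theorem CategoryTheory.Functor.mapArrow_map_left {C D : Type*} [Category C] [Category D]
    (F : C ⥤ D) {X Y : Arrow C} (f : X ⟶ Y) : (F.mapArrow.map f).left = F.map f.left := rfl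

@[simp]
theorem CategoryTheory.Functor.mapArrow_map_right {C D : Type*} [Category C] [Category D]
    (F : C ⥤ D) {X Y : Arrow C} (f : X ⟶ Y) : (F.mapArrow.map f).right = F.map f.right := rfl

theorem DFAux.df_apply {E B : Type*} [Category E] [Category B] {p : E ⥤ B}
    (hp : IsDiscreteFibration p) {e : E} {b : B} (f : b ⟶ p.obj e) :
    ∃! eg : Σ e' : E, e' ⟶ e, ∃ h : p.obj eg.1 = b, p.map eg.2 = eqToHom h ≫ f := hp f

namespace DFAux

attribute [local irreducible] IsDiscreteFibration

@[simp]
theorem arrow_rightFunc_map {C : Type*} [Category C] {X Y : Arrow C} (f : X ⟶ Y) :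
    Arrow.rightFunc.map f = f.right := rfl

@[simp]
theorem arrow_rightFunc_obj {C : Type*} [Category C] (X : Arrow C) :
    Arrow.rightFunc.obj X = X.right := rfl

theorem sigma_ext {C : Type*} [Category C] {e x y : C} {g₁ : x ⟶ e} {g₂ : y ⟶ e}
    (h : (⟨x, g₁⟩ : Σ z : C, z ⟶ e) = ⟨y, g₂⟩) : ∃ hx : x = y, g₁ = eqToHom hx ≫ g₂ := by
  cases h; exact ⟨rfl, by simp⟩

theorem sigma_ext' {C : Type*} [Category C] {e x : C} {g₁ : x ⟶ e} {s : Σ z : C, z ⟶ e}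
    (h : (⟨x, g₁⟩ : Σ z : C, z ⟶ e) = s) : ∃ hx : x = s.1, g₁ = eqToHom hx ≫ s.2 := by
  subst h; exact ⟨rfl, by simp⟩

theorem arr_eqToHom_left {C : Type*} [Category C] {X Y : Arrow C} (h : X = Y) :
    (eqToHom h).left = eqToHom (congrArg Arrow.left h) := by
  cases h; rfl

theorem arr_eqToHom_right {C : Type*} [Category C] {X Y : Arrow C} (h : X = Y) :
    (eqToHom h).right = eqToHom (congrArg Arrow.right h) := by
  cases h; rfl

theorem arrow_ext {C : Type*} [Category C] {X Y : Arrow C} (hl : X.left = Y.left)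
    (hr : X.right = Y.right) (h : X.hom = eqToHom hl ≫ Y.hom ≫ eqToHom hr.symm) : X = Y := by
  obtain ⟨xl, xr, xh⟩ := X
  obtain ⟨yl, yr, yh⟩ := Y
  change xl = yl at hl
  change xr = yr at hr
  subst hl; subst hr
  simp only [eqToHom_refl, Category.comp_id, Category.id_comp] at h
  subst h; rfl

theorem arrow_hom_eq {C : Type*} [Category C] {X Y : Arrow C} (h : X = Y) :
    X.hom = eqToHom (congrArg Arrow.left h) ≫ Y.hom ≫ eqToHom (congrArg Arrow.right h).symm := by
  subst h; simp

variable {E B : Type*} [Category E] [Category B] {p : E ⥤ B}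

noncomputable def dfLift (hp : IsDiscreteFibration p) {e : E} {b : B} (f : b ⟶ p.obj e) :
    Σ e' : E, e' ⟶ e := (df_apply hp f).exists.choose

theorem dfLift_spec (hp : IsDiscreteFibration p) {e : E} {b : B} (f : b ⟶ p.obj e) :
    ∃ h : p.obj (dfLift hp f).1 = b, p.map (dfLift hp f).2 = eqToHom h ≫ f :=
  (df_apply hp f).exists.choose_spec

theorem dfLift_obj (hp : IsDiscreteFibration p) {e : E} {b : B} (f : b ⟶ p.obj e) :
    p.obj (dfLift hp f).1 = b := (dfLift_spec hp f).choose

theorem dfLift_map (hp : IsDiscreteFibration p) {e : E} {b : B} (f : b ⟶ p.obj e) :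
    p.map (dfLift hp f).2 = eqToHom (dfLift_obj hp f) ≫ f := by
  obtain ⟨h, hm⟩ := dfLift_spec hp f
  rw [hm]

theorem dfLift_eq (hp : IsDiscreteFibration p) {e : E} {b : B} (f : b ⟶ p.obj e) {x : E}
    (g : x ⟶ e) (hx : p.obj x = b) (hg : p.map g = eqToHom hx ≫ f) :
    (⟨x, g⟩ : Σ e' : E, e' ⟶ e) = dfLift hp f :=
  (df_apply hp f).unique ⟨hx, hg⟩ (dfLift_spec hp f)

theorem df_map_injective (hp : IsDiscreteFibration p) {x y : E} {u₁ u₂ : x ⟶ y}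
    (h : p.map u₁ = p.map u₂) : u₁ = u₂ := by
  have h1 := dfLift_eq hp (p.map u₂) u₁ rfl (by simpa using h)
  have h2 := dfLift_eq hp (p.map u₂) u₂ rfl (by simp)
  obtain ⟨hx, hg⟩ := sigma_ext (h1.trans h2.symm)
  simpa using hg

end DFAux

namespace DFAux

attribute [local irreducible] IsDiscreteFibration

section LiftFunctor

variable {E B : Type*} [Category E] [Category B] {p : E ⥤ B}
variable (hp : IsDiscreteFibration p)
variable {C : Type*} [Category C] (F : C ⥤ Arrow B) (G : C ⥤ E)
variable (w : F ⋙ Arrow.rightFunc = G ⋙ p)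

/-- the base morphism to lift at `c` -/
@[reducible] def fc (c : C) : (F.obj c).left ⟶ p.obj (G.obj c) :=
  (F.obj c).hom ≫ eqToHom (Functor.congr_obj w c)

@[reducible] noncomputable def liftObj (c : C) : Σ e' : E, e' ⟶ G.obj c := dfLift hp (fc F G w c)

@[reducible] noncomputable def gmor {c c' : C} (φ : c ⟶ c') :
    (F.obj c).left ⟶ p.obj (liftObj hp F G w c').1 :=
  (F.map φ).left ≫ eqToHom (dfLift_obj hp (fc F G w c')).symm

theorem key {c c' : C} (φ : c ⟶ c') :
    (⟨(liftObj hp F G w c).1, (liftObj hp F G w c).2 ≫ G.map φ⟩ : Σ e' : E, e' ⟶ G.obj c')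
      = ⟨(dfLift hp (gmor hp F G w φ)).1,
          (dfLift hp (gmor hp F G w φ)).2 ≫ (liftObj hp F G w c').2⟩ := by
  have h1 : (⟨(liftObj hp F G w c).1, (liftObj hp F G w c).2 ≫ G.map φ⟩ :
        Σ e' : E, e' ⟶ G.obj c') = dfLift hp (fc F G w c ≫ p.map (G.map φ)) := by
    refine dfLift_eq hp _ _ (dfLift_obj hp (fc F G w c)) ?_
    rw [p.map_comp]
    simp only [liftObj] at *
    rw [dfLift_map hp (fc F G w c), Category.assoc]
  have h2 : (⟨(dfLift hp (gmor hp F G w φ)).1,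
        (dfLift hp (gmor hp F G w φ)).2 ≫ (liftObj hp F G w c').2⟩ :
        Σ e' : E, e' ⟶ G.obj c') = dfLift hp (fc F G w c ≫ p.map (G.map φ)) := by
    refine dfLift_eq hp _ _ (dfLift_obj hp (gmor hp F G w φ)) ?_
    rw [p.map_comp]
    simp only [liftObj]
    rw [dfLift_map hp (gmor hp F G w φ), dfLift_map hp (fc F G w c')]
    have hw := Functor.congr_hom w φ
    simp only [Functor.comp_map, arrow_rightFunc_map] at hw
    simp [gmor, fc, hw]
    erw [eqToHom_trans, eqToHom_refl, Category.comp_id]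
  exact h1.trans h2.symm

theorem liftSrc {c c' : C} (φ : c ⟶ c') :
    (liftObj hp F G w c).1 = (dfLift hp (gmor hp F G w φ)).1 :=
  (sigma_ext (key hp F G w φ)).choose

noncomputable def liftU {c c' : C} (φ : c ⟶ c') :
    (liftObj hp F G w c).1 ⟶ (liftObj hp F G w c').1 :=
  eqToHom (liftSrc hp F G w φ) ≫ (dfLift hp (gmor hp F G w φ)).2

theorem liftU_w {c c' : C} (φ : c ⟶ c') :
    liftU hp F G w φ ≫ (liftObj hp F G w c').2 = (liftObj hp F G w c).2 ≫ G.map φ := by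
  obtain ⟨hx, hg⟩ := sigma_ext (key hp F G w φ)
  rw [liftU, Category.assoc, ← hg]

theorem liftU_p {c c' : C} (φ : c ⟶ c') :
    p.map (liftU hp F G w φ) =
      eqToHom (dfLift_obj hp (fc F G w c)) ≫ (F.map φ).left ≫
        eqToHom (dfLift_obj hp (fc F G w c')).symm := by
  rw [liftU, Functor.map_comp, dfLift_map hp (gmor hp F G w φ), eqToHom_map]
  simp [gmor, ← Category.assoc, eqToHom_trans]

noncomputable def liftFunctor : C ⥤ Arrow E where
  obj c := Arrow.mk (liftObj hp F G w c).2
  map {c c'} φ := Arrow.homMk (u := liftU hp F G w φ) (v := G.map φ) (liftU_w hp F G w φ)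
  map_id c := by
    apply Arrow.hom_ext
    · show liftU hp F G w (𝟙 c) = _
      refine df_map_injective hp ?_
      rw [liftU_p]
      simp [liftObj]
    · simp
  map_comp {c c' c''} φ ψ := by
    apply Arrow.hom_ext
    · show liftU hp F G w (φ ≫ ψ) = liftU hp F G w φ ≫ liftU hp F G w ψ
      refine df_map_injective hp ?_
      rw [Functor.map_comp, liftU_p, liftU_p, liftU_p, F.map_comp]
      simp
    · simp

theorem liftFunctor_fst : liftFunctor hp F G w ⋙ p.mapArrow = F := by
  refine CategoryTheory.Functor.ext (fun c => ?_) (h_map := fun c c' φ => ?_)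
  · refine arrow_ext (dfLift_obj hp (fc F G w c)) (Functor.congr_obj w c).symm ?_
    dsimp [liftFunctor, liftObj]
    rw [dfLift_map hp (fc F G w c)]
    simp [fc]
    rfl
  · apply Arrow.hom_ext
    · dsimp [liftFunctor]
      show p.map (liftU hp F G w φ) = _
      rw [liftU_p]
      erw [Arrow.eqToHom_left, Arrow.eqToHom_left]
      rfl
    · dsimp [liftFunctor]
      have hw := Functor.congr_hom w φ
      simp only [Functor.comp_map, arrow_rightFunc_map] at hw
      simp [arr_eqToHom_right, Arrow.eqToHom_right, hw, eqToHom_trans]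
      erw [Arrow.eqToHom_right, Arrow.eqToHom_right, eqToHom_trans_assoc, eqToHom_trans, eqToHom_refl, eqToHom_refl, Category.id_comp, Category.comp_id]

theorem liftFunctor_snd : liftFunctor hp F G w ⋙ Arrow.rightFunc = G := by
  refine CategoryTheory.Functor.ext (fun c => rfl) (h_map := fun c c' φ => ?_)
  simp [liftFunctor]
  erw [eqToHom_refl, Category.id_comp]

theorem liftFunctor_uniq (m : C ⥤ Arrow E) (h1 : m ⋙ p.mapArrow = F)
    (h2 : m ⋙ Arrow.rightFunc = G) : m = liftFunctor hp F G w := by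
  have hobjr : ∀ c : C, (m.obj c).right = G.obj c := fun c => Functor.congr_obj h2 c
  have hkey : ∀ c : C, (⟨(m.obj c).left, (m.obj c).hom ≫ eqToHom (hobjr c)⟩ :
      Σ e' : E, e' ⟶ G.obj c) = liftObj hp F G w c := by
    intro c
    refine dfLift_eq hp _ _ (congrArg Arrow.left (Functor.congr_obj h1 c)) ?_
    have := arrow_hom_eq (Functor.congr_obj h1 c)
    change p.map (m.obj c).hom = _ at this
    rw [p.map_comp, this, eqToHom_map, fc]
    simp
    erw [Category.assoc, Category.assoc, eqToHom_trans]
    rfl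
  refine CategoryTheory.Functor.ext (fun c => ?_) (h_map := fun c c' φ => ?_)
  · obtain ⟨hx, hg⟩ := sigma_ext' (hkey c)
    refine arrow_ext hx (hobjr c) ?_
    dsimp [liftFunctor]
    rw [← Category.assoc, ← hg, Category.assoc]
    erw [eqToHom_trans, eqToHom_refl, Category.comp_id]
  · apply Arrow.hom_ext
    · refine df_map_injective hp ?_
      have hl := congrArg Arrow.Hom.left (Functor.congr_hom h1 φ)
      simp only [Functor.comp_map, Functor.mapArrow_map_left, Arrow.comp_left,
        arr_eqToHom_left] at hl
      dsimp [liftFunctor]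
      rw [Functor.map_comp, Functor.map_comp]
      show _ = _ ≫ p.map (liftU hp F G w φ) ≫ _
      rw [liftU_p, hl]
      simp [arr_eqToHom_left, eqToHom_map, eqToHom_trans]
      erw [Arrow.eqToHom_left, Arrow.eqToHom_left, eqToHom_map, eqToHom_map, eqToHom_trans_assoc]
      exact congrArg (fun t => _ ≫ _ ≫ t) (eqToHom_trans _ _).symm
    · have h := Functor.congr_hom h2 φ
      simp only [Functor.comp_map, arrow_rightFunc_map] at h
      simp [arr_eqToHom_right, Arrow.eqToHom_right, liftFunctor, h]
      erw [Arrow.eqToHom_right, Arrow.eqToHom_right]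

end LiftFunctor

end DFAux

namespace DFAux

theorem arrow_mk_sigma {E : Type*} [Category E] {e x y : E} {g₁ : x ⟶ e} {g₂ : y ⟶ e}
    (h : Arrow.mk g₁ = Arrow.mk g₂) : (⟨x, g₁⟩ : Σ z : E, z ⟶ e) = ⟨y, g₂⟩ := by
  have hl : x = y := congrArg Arrow.left h
  subst hl
  have hh := arrow_hom_eq h
  simp only [Arrow.mk_hom, eqToHom_refl, Category.comp_id, Category.id_comp] at hh
  rw [hh]

section Main

variable {B E : Type u} [SmallCategory B] [SmallCategory E] (p : E ⥤ B)

/-- constant functor at an arrow -/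
noncomputable def constArr {e : E} {x : E} (g : x ⟶ e) :
    Discrete PUnit.{u + 1} ⥤ Arrow E :=
  (Functor.const _).obj (Arrow.mk g)

theorem constArr_comp_rightFunc {e x : E} (g : x ⟶ e) :
    constArr g ⋙ Arrow.rightFunc = (Functor.const _).obj e := by
  refine CategoryTheory.Functor.ext (fun X => rfl) (h_map := fun X Y φ => ?_)
  simp [constArr]
  rfl

theorem constArr_comp_mapArrow {e : E} {b : B} (f : b ⟶ p.obj e) {x : E} (g : x ⟶ e)
    (hx : p.obj x = b) (hg : p.map g = eqToHom hx ≫ f) :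
    constArr g ⋙ p.mapArrow = (Functor.const _).obj (Arrow.mk f) := by
  refine CategoryTheory.Functor.ext (fun X => ?_) (h_map := fun X Y φ => ?_)
  · refine arrow_ext (X := p.mapArrow.obj (Arrow.mk g)) hx rfl ?_
    simp [constArr, hg]
    erw [eqToHom_refl, Category.comp_id]
    rfl
  · simp [constArr, eqToHom_trans]
    erw [eqToHom_trans]
    rfl

theorem const_cone_w {e : E} {b : B} (f : b ⟶ p.obj e) :
    ((Functor.const (Discrete PUnit.{u + 1})).obj (Arrow.mk f)) ⋙ Arrow.rightFunc
      = ((Functor.const (Discrete PUnit.{u + 1})).obj e) ⋙ p := by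
  refine CategoryTheory.Functor.ext (fun X => rfl) (h_map := fun X Y φ => ?_)
  simp
  rfl

end Main

end DFAux


open DFAux

/-- `p : E ⥤ B` is a discrete fibration iff the square with top edge `p^→` on arrow
categories, vertical edges the codomain functors, and bottom edge `p`, is a pullback
square in `Cat`. -/
theorem discreteFibration_iff_arrow_square_isPullback
    {B E : Type u} [SmallCategory B] [SmallCategory E] (p : E ⥤ B) :
    IsDiscreteFibration p ↔
      IsPullback (C := Cat.{u, u})
        (show Cat.of (Arrow E) ⟶ Cat.of (Arrow B) from p.mapArrow.toCatHom)
        (show Cat.of (Arrow E) ⟶ Cat.of E from (Arrow.rightFunc : Arrow E ⥤ E).toCatHom)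
        (show Cat.of (Arrow B) ⟶ Cat.of B from (Arrow.rightFunc : Arrow B ⥤ B).toCatHom)
        (show Cat.of E ⟶ Cat.of B from p.toCatHom) := by
  constructor
  · intro hp
    have eq : (show Cat.of (Arrow E) ⟶ Cat.of (Arrow B) from p.mapArrow.toCatHom) ≫
          (show Cat.of (Arrow B) ⟶ Cat.of B from (Arrow.rightFunc : Arrow B ⥤ B).toCatHom)
        = (show Cat.of (Arrow E) ⟶ Cat.of E from (Arrow.rightFunc : Arrow E ⥤ E).toCatHom) ≫
          (show Cat.of E ⟶ Cat.of B from p.toCatHom) := rfl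
    refine IsPullback.of_isLimit (Limits.PullbackCone.IsLimit.mk eq
      (fun s => ⟨liftFunctor hp s.fst.toFunctor s.snd.toFunctor (congrArg Cat.Hom.toFunctor s.condition)⟩)
      (fun s => Cat.ext (liftFunctor_fst hp s.fst.toFunctor s.snd.toFunctor (congrArg Cat.Hom.toFunctor s.condition)))
      (fun s => Cat.ext (liftFunctor_snd hp s.fst.toFunctor s.snd.toFunctor (congrArg Cat.Hom.toFunctor s.condition)))
      (fun s m h1 h2 => Cat.ext (liftFunctor_uniq hp s.fst.toFunctor s.snd.toFunctor (congrArg Cat.Hom.toFunctor s.condition) m.toFunctor (congrArg Cat.Hom.toFunctor h1) (congrArg Cat.Hom.toFunctor h2))))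
  · intro hb e b f
    have hw := const_cone_w p f
    let ℓ : Cat.of (Discrete PUnit.{u + 1}) ⟶ Cat.of (Arrow E) :=
      hb.lift ((Functor.const _).obj (Arrow.mk f)).toCatHom ((Functor.const _).obj e).toCatHom (Cat.ext hw)
    have hfst : ℓ ≫ (show Cat.of (Arrow E) ⟶ Cat.of (Arrow B) from p.mapArrow.toCatHom)
        = ((Functor.const _).obj (Arrow.mk f)).toCatHom := hb.lift_fst _ _ _
    have hsnd : ℓ ≫ (show Cat.of (Arrow E) ⟶ Cat.of E from (Arrow.rightFunc : Arrow E ⥤ E).toCatHom)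
        = ((Functor.const _).obj e).toCatHom := hb.lift_snd _ _ _
    set X : Arrow E := ℓ.toFunctor.obj ⟨PUnit.unit⟩ with hX
    have hXr : X.right = e := Functor.congr_obj (congrArg Cat.Hom.toFunctor hsnd) ⟨PUnit.unit⟩
    have hXf : p.mapArrow.obj X = Arrow.mk f := Functor.congr_obj (congrArg Cat.Hom.toFunctor hfst) ⟨PUnit.unit⟩
    have hl : p.obj X.left = b := congrArg Arrow.left hXf
    have hh := arrow_hom_eq hXf
    simp only [Functor.mapArrow_obj_hom, Arrow.mk_hom] at hh
    have hP : ∀ (x : E) (g : x ⟶ e), (∃ h : p.obj x = b, p.map g = eqToHom h ≫ f) →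
        constArr g ⋙ p.mapArrow = (Functor.const _).obj (Arrow.mk f)
          ∧ constArr g ⋙ Arrow.rightFunc = (Functor.const _).obj e := by
      rintro x g ⟨hx, hg⟩
      exact ⟨constArr_comp_mapArrow p f g hx hg, constArr_comp_rightFunc g⟩
    have huniq : ∀ (x y : E) (g₁ : x ⟶ e) (g₂ : y ⟶ e),
        (∃ h : p.obj x = b, p.map g₁ = eqToHom h ≫ f) →
        (∃ h : p.obj y = b, p.map g₂ = eqToHom h ≫ f) →
        (⟨x, g₁⟩ : Σ z : E, z ⟶ e) = ⟨y, g₂⟩ := by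
      intro x y g₁ g₂ h₁ h₂
      obtain ⟨ha, hb₁⟩ := hP x g₁ h₁
      obtain ⟨hc, hd⟩ := hP y g₂ h₂
      have : (show Cat.of (Discrete PUnit.{u + 1}) ⟶ Cat.of (Arrow E) from (constArr g₁).toCatHom)
          = (show Cat.of (Discrete PUnit.{u + 1}) ⟶ Cat.of (Arrow E) from (constArr g₂).toCatHom) :=
        hb.hom_ext (Cat.ext (ha.trans hc.symm)) (Cat.ext (hb₁.trans hd.symm))
      exact arrow_mk_sigma (Functor.congr_obj (congrArg Cat.Hom.toFunctor this) ⟨PUnit.unit⟩)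
    refine ⟨⟨X.left, X.hom ≫ eqToHom hXr⟩, ⟨hl, ?_⟩, ?_⟩
    · rw [p.map_comp, hh, eqToHom_map]
      simp [eqToHom_trans]
      erw [Category.assoc, Category.assoc, eqToHom_trans, eqToHom_refl, Category.comp_id]
      rfl
    · rintro ⟨y, g⟩ hy
      refine huniq y X.left g (X.hom ≫ eqToHom hXr) hy ⟨hl, ?_⟩
      rw [p.map_comp, hh, eqToHom_map]
      simp [eqToHom_trans]
      erw [Category.assoc, Category.assoc, eqToHom_trans, eqToHom_refl, Category.comp_id]
      rfl
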